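/- For every natural number k ≥ 1, every α > 1, and all x, y > 0, we have ∑_{j=0}^k C(αk, αj) x^{αj} y^{α(k-j)} < (x+y)^{αk}, where C(a,b) = Γ(a+1)/(Γ(b+1)Γ(a-b+1)). -/

import Mathlib

noncomputable def genBinom (a b : ℝ) : ℝ :=
  Real.Gamma (a + 1) / (Real.Gamma (b + 1) * Real.Gamma (a - b + 1))

open Real Finset Filter Topology

lemma tele_sum (x : ℝ) (hx : 0 < x) (N : ℕ) :
    ∑ i ∈ Finset.range N, (x + i + 1)⁻¹ ^ 2 ≤ x⁻¹ := by
  have key : ∑ i ∈ Finset.range N, (x + i + 1)⁻¹ ^ 2 ≤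
      ∑ i ∈ Finset.range N, ((x + i)⁻¹ - (x + i + 1)⁻¹) := by
    apply Finset.sum_le_sum
    intro i _
    have h1 : (0:ℝ) < x + i := by positivity
    have h2 : (0:ℝ) < x + i + 1 := by positivity
    rw [inv_sub_inv h1.ne' h2.ne']
    rw [div_eq_mul_inv, pow_two, ← mul_inv]
    have : (x + i + 1 - (x + i)) = 1 := by ring
    rw [this, one_mul]
    apply inv_anti₀ (by positivity)
    nlinarith
  calc ∑ i ∈ Finset.range N, (x + i + 1)⁻¹ ^ 2 ≤ _ := key
    _ = (x + (0:ℕ))⁻¹ - (x + N)⁻¹ := by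
        have := Finset.sum_range_sub' (f := fun i : ℕ => (x + i)⁻¹) N
        simp only [Nat.cast_add, Nat.cast_one] at this ⊢
        rw [← this]
        apply Finset.sum_congr rfl
        intro i _
        push_cast
        ring_nf
    _ ≤ x⁻¹ := by
        simp only [Nat.cast_zero, add_zero]
        have : (0:ℝ) ≤ (x + N)⁻¹ := by positivity
        linarith

lemma F_mono (s : ℝ) (hs : 0 < s) (N : ℕ) {j k : ℝ} (hj : 0 < j) (hjk : j ≤ k) :
    Real.log j + ∑ i ∈ Finset.range N, (s * j + i + 1)⁻¹ ≤
      Real.log k + ∑ i ∈ Finset.range N, (s * k + i + 1)⁻¹ := by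
  set f : ℝ → ℝ := fun m => Real.log m + ∑ i ∈ Finset.range N, (s * m + i + 1)⁻¹ with hf
  have key : MonotoneOn f (Set.Ici j) := by
    apply monotoneOn_of_hasDerivWithinAt_nonneg (f' := fun m =>
        m⁻¹ + ∑ i ∈ Finset.range N, (-(s) / (s * m + i + 1) ^ 2)) (convex_Ici j)
    · -- continuity
      apply ContinuousOn.add
      · apply Real.continuousOn_log.mono
        intro m hm
        simp only [Set.mem_Ici] at hm
        simp only [Set.mem_compl_iff, Set.mem_singleton_iff]
        exact (lt_of_lt_of_le hj hm).ne'
      · apply continuousOn_finset_sum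
        intro i _
        apply ContinuousOn.inv₀
        · fun_prop
        · intro m hm
          simp only [Set.mem_Ici] at hm
          have h0 : 0 < s * m := mul_pos hs (hj.trans_le hm)
          have h1 : (0:ℝ) ≤ (i:ℝ) := Nat.cast_nonneg i
          intro hcon
          nlinarith
    · intro m hm
      rw [interior_Ici] at hm
      simp only [Set.mem_Ioi] at hm
      have hm0 : 0 < m := hj.trans hm
      apply HasDerivAt.hasDerivWithinAt
      apply HasDerivAt.add
      · exact Real.hasDerivAt_log hm0.ne'
      · apply HasDerivAt.fun_sum
        intro i _
        have h1 : HasDerivAt (fun m : ℝ => s * m + i + 1) s m := by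
          have := ((hasDerivAt_id m).const_mul s).add_const ((i:ℝ) + 1)
          simpa [add_assoc] using this
        have h2 : (0:ℝ) < s * m + i + 1 := by positivity
        exact h1.inv h2.ne'
    · intro m hm
      rw [interior_Ici] at hm
      simp only [Set.mem_Ioi] at hm
      have hm0 : 0 < m := hj.trans hm
      have hsum : ∑ i ∈ Finset.range N, s / (s * m + i + 1) ^ 2 ≤ m⁻¹ := by
        have := tele_sum (s * m) (by positivity) N
        calc ∑ i ∈ Finset.range N, s / (s * m + i + 1) ^ 2
            = s * ∑ i ∈ Finset.range N, (s * m + i + 1)⁻¹ ^ 2 := by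
              rw [Finset.mul_sum]; apply Finset.sum_congr rfl; intro i _
              rw [div_eq_mul_inv, ← inv_pow]
          _ ≤ s * (s * m)⁻¹ := by
              apply mul_le_mul_of_nonneg_left this hs.le
          _ = m⁻¹ := by field_simp
      have : ∑ i ∈ Finset.range N, (-(s) / (s * m + i + 1) ^ 2) =
          - ∑ i ∈ Finset.range N, s / (s * m + i + 1) ^ 2 := by
        rw [← Finset.sum_neg_distrib]; apply Finset.sum_congr rfl; intro i _; ring
      rw [this]
      linarith
  have h1 : j ∈ Set.Ici j := Set.self_mem_Ici
  have h2 : k ∈ Set.Ici j := hjk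
  exact key h1 h2 hjk

noncomputable def Phi (N : ℕ) (a m : ℝ) : ℝ :=
  (a - 1) * Real.log m + (1 / m) * ∑ i ∈ Finset.range N,
    (Real.log (a * m + i + 1) - Real.log (m + i + 1))

lemma Phi_deriv (N : ℕ) (m : ℝ) (hm : 1 ≤ m) {a : ℝ} (ha : 0 < a) :
    HasDerivAt (fun a => Phi N a m)
      (Real.log m + ∑ i ∈ Finset.range N, (a * m + i + 1)⁻¹) a := by
  have hm0 : 0 < m := lt_of_lt_of_le one_pos hm
  have h1 : HasDerivAt (fun a : ℝ => (a - 1) * Real.log m) (Real.log m) a := by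
    simpa using ((hasDerivAt_id a).sub_const 1).mul_const (Real.log m)
  have h2 : HasDerivAt (fun a : ℝ => (1 / m) * ∑ i ∈ Finset.range N,
      (Real.log (a * m + i + 1) - Real.log (m + i + 1)))
      ((1 / m) * ∑ i ∈ Finset.range N, (m / (a * m + i + 1))) a := by
    apply HasDerivAt.const_mul
    apply HasDerivAt.fun_sum
    intro i _
    have hpos : 0 < a * m + i + 1 := by positivity
    have hlin : HasDerivAt (fun a : ℝ => a * m + i + 1) m a := by
      have := ((hasDerivAt_id a).mul_const m).add_const ((i:ℝ) + 1)
      simpa [add_assoc] using this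
    have hlog : HasDerivAt (fun a : ℝ => Real.log (a * m + i + 1))
        (m / (a * m + i + 1)) a := by
      have := (Real.hasDerivAt_log hpos.ne').comp a hlin
      rw [div_eq_inv_mul]; exact this
    simpa using hlog.sub_const (Real.log (m + i + 1))
  have := h1.add h2
  have heq : (1 / m) * ∑ i ∈ Finset.range N, (m / (a * m + i + 1)) =
      ∑ i ∈ Finset.range N, (a * m + i + 1)⁻¹ := by
    rw [Finset.mul_sum]
    apply Finset.sum_congr rfl
    intro i _
    field_simp
  rw [heq] at this
  exact this

lemma Phi_mono (N : ℕ) {j k : ℝ} (hj : 1 ≤ j) (hjk : j ≤ k) {a : ℝ} (ha : 1 ≤ a) :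
    Phi N a j ≤ Phi N a k := by
  have hj0 : 0 < j := lt_of_lt_of_le one_pos hj
  have hk : 1 ≤ k := hj.trans hjk
  set g : ℝ → ℝ := fun a => Phi N a k - Phi N a j with hg
  have key : MonotoneOn g (Set.Ici 1) := by
    apply monotoneOn_of_hasDerivWithinAt_nonneg (f' := fun a =>
      (Real.log k + ∑ i ∈ Finset.range N, (a * k + i + 1)⁻¹) -
      (Real.log j + ∑ i ∈ Finset.range N, (a * j + i + 1)⁻¹)) (convex_Ici 1)
    · apply ContinuousOn.sub <;>
      · intro a ha'
        simp only [Set.mem_Ici] at ha'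
        exact ((Phi_deriv N _ (by assumption) (lt_of_lt_of_le one_pos ha')).continuousAt).continuousWithinAt
    · intro a ha'
      rw [interior_Ici] at ha'
      simp only [Set.mem_Ioi] at ha'
      exact (((Phi_deriv N k hk (lt_trans one_pos ha')).sub
        (Phi_deriv N j hj (lt_trans one_pos ha'))).hasDerivWithinAt)
    · intro a ha'
      rw [interior_Ici] at ha'
      simp only [Set.mem_Ioi] at ha'
      have := F_mono a (lt_trans one_pos ha') N hj0 hjk
      linarith
  have h0 : Phi N 1 j = 0 := by
    simp [Phi]
  have h0' : Phi N 1 k = 0 := by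
    simp [Phi]
  have h1 : g 1 ≤ g a := key Set.self_mem_Ici (by simpa using ha) ha
  rw [hg] at h1
  simp only at h1
  rw [h0, h0'] at h1
  simp only [sub_zero] at h1
  linarith

lemma log_GammaSeq {s : ℝ} (hs : 0 < s) {n : ℕ} (hn : 1 ≤ n) :
    Real.log (Real.GammaSeq s n) =
      s * Real.log n + Real.log (Nat.factorial n : ℝ) - ∑ i ∈ Finset.range (n + 1), Real.log (s + i) := by
  have hn0 : (0:ℝ) < n := by exact_mod_cast hn
  have hfac : (0:ℝ) < (Nat.factorial n : ℝ) := by exact_mod_cast Nat.factorial_pos n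
  have hprod : ∀ i ∈ Finset.range (n+1), (0:ℝ) < s + i := by
    intro i _
    positivity
  have hprodpos : (0:ℝ) < ∏ i ∈ Finset.range (n+1), (s + i) :=
    Finset.prod_pos hprod
  rw [Real.GammaSeq, Real.log_div (by positivity) hprodpos.ne', Real.log_mul (by positivity) hfac.ne',
    Real.log_rpow hn0, Real.log_prod (fun i hi => (hprod i hi).ne')]

lemma D_eq {α : ℝ} (hα : 1 ≤ α) {m : ℝ} (hm : 1 ≤ m) {n : ℕ} (hn : 1 ≤ n) :
    (Real.log (Real.GammaSeq (α * m + 1) n) - Real.log (Real.GammaSeq (m + 1) n)) / m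
      - (α - 1) * Real.log m = (α - 1) * Real.log n - Phi (n + 1) α m := by
  have hm0 : 0 < m := lt_of_lt_of_le one_pos hm
  have hαm : 0 < α * m + 1 := by nlinarith
  have h1 := log_GammaSeq hαm hn
  have h2 := log_GammaSeq (by positivity : (0:ℝ) < m + 1) hn
  rw [h1, h2, Phi]
  have hsum : ∑ i ∈ Finset.range (n + 1),
      (Real.log (α * m + i + 1) - Real.log (m + i + 1)) =
      (∑ i ∈ Finset.range (n + 1), Real.log (α * m + 1 + i)) -
      (∑ i ∈ Finset.range (n + 1), Real.log (m + 1 + i)) := by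
    rw [← Finset.sum_sub_distrib]
    apply Finset.sum_congr rfl
    intro i _
    rw [show α * m + 1 + (i:ℝ) = α * m + i + 1 by ring,
        show m + 1 + (i:ℝ) = m + i + 1 by ring]
  rw [hsum]
  set L := Real.log (n:ℝ) with hL
  set A := ∑ i ∈ Finset.range (n+1), Real.log (α * m + 1 + i) with hA
  set B := ∑ i ∈ Finset.range (n+1), Real.log (m + 1 + i) with hB
  field_simp
  ring


noncomputable def rfun (α m : ℝ) : ℝ :=
  (Real.log (Real.Gamma (α * m + 1)) - Real.log (Real.Gamma (m + 1))) / m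
    - (α - 1) * Real.log m

lemma D_tendsto {α : ℝ} (hα : 1 ≤ α) {m : ℝ} (hm : 1 ≤ m) :
    Tendsto (fun n : ℕ =>
      (Real.log (Real.GammaSeq (α * m + 1) n) - Real.log (Real.GammaSeq (m + 1) n)) / m
        - (α - 1) * Real.log m) atTop (𝓝 (rfun α m)) := by
  have hm0 : 0 < m := lt_of_lt_of_le one_pos hm
  have hαm : 0 < α * m + 1 := by nlinarith
  have hg1 : 0 < Real.Gamma (α * m + 1) := Real.Gamma_pos_of_pos hαm
  have hg2 : 0 < Real.Gamma (m + 1) := Real.Gamma_pos_of_pos (by positivity)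
  have t1 : Tendsto (fun n : ℕ => Real.log (Real.GammaSeq (α * m + 1) n)) atTop
      (𝓝 (Real.log (Real.Gamma (α * m + 1)))) :=
    (Real.GammaSeq_tendsto_Gamma (α * m + 1)).log hg1.ne'
  have t2 : Tendsto (fun n : ℕ => Real.log (Real.GammaSeq (m + 1) n)) atTop
      (𝓝 (Real.log (Real.Gamma (m + 1)))) :=
    (Real.GammaSeq_tendsto_Gamma (m + 1)).log hg2.ne'
  have := ((t1.sub t2).div_const m).sub (tendsto_const_nhds (x := (α - 1) * Real.log m))
  exact this

lemma r_anti {α : ℝ} (hα : 1 ≤ α) {j k : ℝ} (hj : 1 ≤ j) (hjk : j ≤ k) :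
    rfun α k ≤ rfun α j := by
  have hk : 1 ≤ k := hj.trans hjk
  have key : Tendsto (fun n : ℕ =>
      ((Real.log (Real.GammaSeq (α * j + 1) n) - Real.log (Real.GammaSeq (j + 1) n)) / j
        - (α - 1) * Real.log j) -
      ((Real.log (Real.GammaSeq (α * k + 1) n) - Real.log (Real.GammaSeq (k + 1) n)) / k
        - (α - 1) * Real.log k)) atTop (𝓝 (rfun α j - rfun α k)) :=
    (D_tendsto hα hj).sub (D_tendsto hα hk)
  have hnonneg : ∀ᶠ n : ℕ in atTop, 0 ≤
      ((Real.log (Real.GammaSeq (α * j + 1) n) - Real.log (Real.GammaSeq (j + 1) n)) / j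
        - (α - 1) * Real.log j) -
      ((Real.log (Real.GammaSeq (α * k + 1) n) - Real.log (Real.GammaSeq (k + 1) n)) / k
        - (α - 1) * Real.log k) := by
    filter_upwards [eventually_ge_atTop 1] with n hn
    rw [D_eq hα hj hn, D_eq hα hk hn]
    have := Phi_mono (n + 1) hj hjk hα
    linarith
  have := ge_of_tendsto key hnonneg
  linarith

noncomputable def lg (α m : ℝ) : ℝ :=
  Real.log (Real.Gamma (α * m + 1)) - Real.log (Real.Gamma (m + 1))
    - (α - 1) * m * Real.log m

lemma lg_eq (α : ℝ) {m : ℝ} (hm : 0 < m) : lg α m = m * rfun α m := by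
  rw [lg, rfun]
  field_simp

lemma lg_subadd {α : ℝ} (hα : 1 ≤ α) {a b : ℝ} (ha : 1 ≤ a) (hb : 1 ≤ b) :
    lg α (a + b) ≤ lg α a + lg α b := by
  have ha0 : 0 < a := lt_of_lt_of_le one_pos ha
  have hb0 : 0 < b := lt_of_lt_of_le one_pos hb
  have h1 : rfun α (a + b) ≤ rfun α a := r_anti hα ha (by linarith)
  have h2 : rfun α (a + b) ≤ rfun α b := r_anti hα hb (by linarith)
  rw [lg_eq α (by linarith : (0:ℝ) < a + b), lg_eq α ha0, lg_eq α hb0]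
  nlinarith

lemma lemmaA {α : ℝ} (hα : 1 ≤ α) {j b : ℕ} (hj : 1 ≤ j) (hb : 1 ≤ b) :
    genBinom (α * ((j:ℝ) + b)) (α * j) *
      (((j:ℝ) ^ (j:ℝ) * (b:ℝ) ^ (b:ℝ)) / ((j:ℝ) + b) ^ ((j:ℝ) + b)) ^ (α - 1)
      ≤ ((j + b).choose j : ℝ) := by
  have hJ : (1:ℝ) ≤ (j:ℝ) := by exact_mod_cast hj
  have hB : (1:ℝ) ≤ (b:ℝ) := by exact_mod_cast hb
  have hJ0 : (0:ℝ) < j := lt_of_lt_of_le one_pos hJ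
  have hB0 : (0:ℝ) < b := lt_of_lt_of_le one_pos hB
  have hK0 : (0:ℝ) < (j:ℝ) + b := by linarith
  have hαJ : (0:ℝ) < α * j + 1 := by nlinarith
  have hαB : (0:ℝ) < α * b + 1 := by nlinarith
  have hαK : (0:ℝ) < α * ((j:ℝ) + b) + 1 := by nlinarith
  have g1 : 0 < Real.Gamma (α * ((j:ℝ) + b) + 1) := Real.Gamma_pos_of_pos hαK
  have g2 : 0 < Real.Gamma (α * j + 1) := Real.Gamma_pos_of_pos hαJ
  have g3 : 0 < Real.Gamma (α * b + 1) := Real.Gamma_pos_of_pos hαB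
  have g4 : 0 < Real.Gamma ((j:ℝ) + b + 1) := Real.Gamma_pos_of_pos (by linarith)
  have g5 : 0 < Real.Gamma ((j:ℝ) + 1) := Real.Gamma_pos_of_pos (by linarith)
  have g6 : 0 < Real.Gamma ((b:ℝ) + 1) := Real.Gamma_pos_of_pos (by linarith)
  have hgb : genBinom (α * ((j:ℝ) + b)) (α * j) =
      Real.Gamma (α * ((j:ℝ) + b) + 1) /
        (Real.Gamma (α * j + 1) * Real.Gamma (α * b + 1)) := by
    rw [genBinom, show α * ((j:ℝ) + b) - α * j + 1 = α * b + 1 by ring]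
  have hM0 : (0:ℝ) < ((j:ℝ) ^ (j:ℝ) * (b:ℝ) ^ (b:ℝ)) / ((j:ℝ) + b) ^ ((j:ℝ) + b) := by
    have p1 : (0:ℝ) < (j:ℝ) ^ (j:ℝ) := Real.rpow_pos_of_pos hJ0 _
    have p2 : (0:ℝ) < (b:ℝ) ^ (b:ℝ) := Real.rpow_pos_of_pos hB0 _
    have p3 : (0:ℝ) < ((j:ℝ) + b) ^ ((j:ℝ) + b) := Real.rpow_pos_of_pos hK0 _
    positivity
  have hLpos : 0 < genBinom (α * ((j:ℝ) + b)) (α * j) *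
      (((j:ℝ) ^ (j:ℝ) * (b:ℝ) ^ (b:ℝ)) / ((j:ℝ) + b) ^ ((j:ℝ) + b)) ^ (α - 1) := by
    rw [hgb]
    have := Real.rpow_pos_of_pos hM0 (α - 1)
    positivity
  have hchoosepos : 0 < ((j + b).choose j : ℝ) := by
    exact_mod_cast Nat.choose_pos (Nat.le_add_right j b)
  have hchoose : ((j + b).choose j : ℝ) =
      Real.Gamma ((j:ℝ) + b + 1) / (Real.Gamma ((j:ℝ) + 1) * Real.Gamma ((b:ℝ) + 1)) := by
    rw [show ((j:ℝ) + b + 1) = (((j + b : ℕ)):ℝ) + 1 by push_cast; ring,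
      Real.Gamma_nat_eq_factorial, Real.Gamma_nat_eq_factorial, Real.Gamma_nat_eq_factorial]
    rw [eq_div_iff (by positivity)]
    have hnat := Nat.choose_mul_factorial_mul_factorial (Nat.le_add_right j b)
    rw [Nat.add_sub_cancel_left] at hnat
    push_cast [← hnat]
    ring
  -- log inequality
  have hsub := lg_subadd hα hJ hB
  rw [lg, lg, lg] at hsub
  have hloglhs : Real.log (genBinom (α * ((j:ℝ) + b)) (α * j) *
      (((j:ℝ) ^ (j:ℝ) * (b:ℝ) ^ (b:ℝ)) / ((j:ℝ) + b) ^ ((j:ℝ) + b)) ^ (α - 1)) =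
      (Real.log (Real.Gamma (α * ((j:ℝ) + b) + 1)) - Real.log (Real.Gamma (α * j + 1))
        - Real.log (Real.Gamma (α * b + 1)))
      + (α - 1) * ((j:ℝ) * Real.log j + (b:ℝ) * Real.log b
        - ((j:ℝ) + b) * Real.log ((j:ℝ) + b)) := by
    rw [Real.log_mul (by rw [hgb]; positivity) (Real.rpow_pos_of_pos hM0 _).ne', hgb,
      Real.log_div g1.ne' (by positivity), Real.log_mul g2.ne' g3.ne',
      Real.log_rpow hM0,
      Real.log_div (by positivity) (Real.rpow_pos_of_pos hK0 _).ne',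
      Real.log_mul (Real.rpow_pos_of_pos hJ0 _).ne' (Real.rpow_pos_of_pos hB0 _).ne',
      Real.log_rpow hJ0, Real.log_rpow hB0, Real.log_rpow hK0]
    ring
  have hlogrhs : Real.log ((j + b).choose j : ℝ) =
      Real.log (Real.Gamma ((j:ℝ) + b + 1)) - Real.log (Real.Gamma ((j:ℝ) + 1))
        - Real.log (Real.Gamma ((b:ℝ) + 1)) := by
    rw [hchoose, Real.log_div g4.ne' (by positivity), Real.log_mul g5.ne' g6.ne']
    ring
  have hlog : Real.log (genBinom (α * ((j:ℝ) + b)) (α * j) *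
      (((j:ℝ) ^ (j:ℝ) * (b:ℝ) ^ (b:ℝ)) / ((j:ℝ) + b) ^ ((j:ℝ) + b)) ^ (α - 1)) ≤
      Real.log ((j + b).choose j : ℝ) := by
    rw [hloglhs, hlogrhs]
    nlinarith [hsub]
  have := Real.exp_le_exp.mpr hlog
  rwa [Real.exp_log hLpos, Real.exp_log hchoosepos] at this

lemma amgm {x y : ℝ} (hx : 0 < x) (hy : 0 < y) {J B : ℝ} (hJ : 0 < J) (hB : 0 < B) :
    x ^ J * y ^ B ≤ (J ^ J * B ^ B / (J + B) ^ (J + B)) * (x + y) ^ (J + B) := by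
  set K := J + B with hK
  have hK0 : 0 < K := by positivity
  have h1 : (K * x / J) ^ (J / K) * (K * y / B) ^ (B / K) ≤ x + y := by
    have := Real.geom_mean_le_arith_mean2_weighted
      (by positivity : (0:ℝ) ≤ J / K) (by positivity : (0:ℝ) ≤ B / K)
      (by positivity : (0:ℝ) ≤ K * x / J) (by positivity : (0:ℝ) ≤ K * y / B)
      (by field_simp; exact hK.symm : J / K + B / K = 1)
    calc (K * x / J) ^ (J / K) * (K * y / B) ^ (B / K) ≤
        J / K * (K * x / J) + B / K * (K * y / B) := this
      _ = x + y := by field_simp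
  have h2 : ((K * x / J) ^ (J / K) * (K * y / B) ^ (B / K)) ^ K ≤ (x + y) ^ K := by
    apply Real.rpow_le_rpow (by positivity) h1 hK0.le
  have h3 : ((K * x / J) ^ (J / K) * (K * y / B) ^ (B / K)) ^ K =
      (K * x / J) ^ J * (K * y / B) ^ B := by
    rw [Real.mul_rpow (by positivity) (by positivity),
      ← Real.rpow_mul (by positivity), ← Real.rpow_mul (by positivity)]
    rw [div_mul_cancel₀ _ hK0.ne', div_mul_cancel₀ _ hK0.ne']
  rw [h3] at h2
  have h4 : (K * x / J) ^ J = K ^ J * x ^ J / J ^ J := by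
    rw [Real.div_rpow (by positivity) hJ.le, Real.mul_rpow hK0.le hx.le]
  have h5 : (K * y / B) ^ B = K ^ B * y ^ B / B ^ B := by
    rw [Real.div_rpow (by positivity) hB.le, Real.mul_rpow hK0.le hy.le]
  rw [h4, h5] at h2
  have hKK : K ^ K = K ^ J * K ^ B := by
    rw [← Real.rpow_add hK0]
  have pJJ : (0:ℝ) < J ^ J := Real.rpow_pos_of_pos hJ _
  have pBB : (0:ℝ) < B ^ B := Real.rpow_pos_of_pos hB _
  have pKJ : (0:ℝ) < K ^ J := Real.rpow_pos_of_pos hK0 _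
  have pKB : (0:ℝ) < K ^ B := Real.rpow_pos_of_pos hK0 _
  rw [div_mul_eq_mul_div, le_div_iff₀ (by positivity : (0:ℝ) < K ^ K)]
  rw [hKK]
  have expand : K ^ J * x ^ J / J ^ J * (K ^ B * y ^ B / B ^ B) * (J ^ J * B ^ B) =
      x ^ J * y ^ B * (K ^ J * K ^ B) := by
    field_simp
  calc x ^ J * y ^ B * (K ^ J * K ^ B)
      = K ^ J * x ^ J / J ^ J * (K ^ B * y ^ B / B ^ B) * (J ^ J * B ^ B) := expand.symm
    _ ≤ (x + y) ^ K * (J ^ J * B ^ B) := by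
        apply mul_le_mul_of_nonneg_right h2 (by positivity)
    _ = J ^ J * B ^ B * (x + y) ^ K := by ring

lemma middle_term {α : ℝ} (hα : 1 < α) {x y : ℝ} (hx : 0 < x) (hy : 0 < y)
    {j b : ℕ} (hj : 1 ≤ j) (hb : 1 ≤ b) :
    genBinom (α * ((j:ℝ) + b)) (α * j) * x ^ (α * (j:ℝ)) * y ^ (α * (b:ℝ)) ≤
      ((j + b).choose j : ℝ) * (x ^ ((j:ℝ)) * y ^ ((b:ℝ))) *
        (x + y) ^ ((α - 1) * ((j:ℝ) + b)) := by
  have hJ : (1:ℝ) ≤ (j:ℝ) := by exact_mod_cast hj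
  have hB : (1:ℝ) ≤ (b:ℝ) := by exact_mod_cast hb
  have hJ0 : (0:ℝ) < j := lt_of_lt_of_le one_pos hJ
  have hB0 : (0:ℝ) < b := lt_of_lt_of_le one_pos hB
  set J := (j:ℝ) with hJdef
  set B := (b:ℝ) with hBdef
  set K := J + B with hKdef
  have hK0 : (0:ℝ) < K := by positivity
  have hxy : (0:ℝ) < x + y := by linarith
  have hαK : (0:ℝ) < α * K + 1 := by nlinarith
  have hgb : genBinom (α * K) (α * J) =
      Real.Gamma (α * K + 1) / (Real.Gamma (α * J + 1) * Real.Gamma (α * B + 1)) := by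
    rw [genBinom, show α * K - α * J + 1 = α * B + 1 by rw [hKdef]; ring]
  have hgbpos : 0 < genBinom (α * K) (α * J) := by
    rw [hgb]
    have g1 := Real.Gamma_pos_of_pos hαK
    have g2 := Real.Gamma_pos_of_pos (show (0:ℝ) < α * J + 1 by nlinarith)
    have g3 := Real.Gamma_pos_of_pos (show (0:ℝ) < α * B + 1 by nlinarith)
    positivity
  set M := J ^ J * B ^ B / K ^ K with hMdef
  have hM0 : 0 < M := by
    have p1 : (0:ℝ) < J ^ J := Real.rpow_pos_of_pos hJ0 _
    have p2 : (0:ℝ) < B ^ B := Real.rpow_pos_of_pos hB0 _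
    have p3 : (0:ℝ) < K ^ K := Real.rpow_pos_of_pos hK0 _
    positivity
  have pxJ : (0:ℝ) < x ^ J := Real.rpow_pos_of_pos hx _
  have pyB : (0:ℝ) < y ^ B := Real.rpow_pos_of_pos hy _
  have e1 : x ^ (α * J) = x ^ J * x ^ (J * (α - 1)) := by
    rw [show α * J = J + J * (α - 1) by ring, Real.rpow_add hx]
  have e2 : y ^ (α * B) = y ^ B * y ^ (B * (α - 1)) := by
    rw [show α * B = B + B * (α - 1) by ring, Real.rpow_add hy]
  have e3 : x ^ (J * (α - 1)) * y ^ (B * (α - 1)) = (x ^ J * y ^ B) ^ (α - 1) := by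
    rw [Real.rpow_mul hx.le, Real.rpow_mul hy.le, ← Real.mul_rpow pxJ.le pyB.le]
  have hAM : (x ^ J * y ^ B) ^ (α - 1) ≤ (M * (x + y) ^ K) ^ (α - 1) := by
    apply Real.rpow_le_rpow (by positivity) _ (by linarith)
    rw [hMdef]
    exact amgm hx hy hJ0 hB0
  have e4 : (M * (x + y) ^ K) ^ (α - 1) = M ^ (α - 1) * (x + y) ^ (K * (α - 1)) := by
    rw [Real.mul_rpow hM0.le (Real.rpow_pos_of_pos hxy _).le,
      ← Real.rpow_mul hxy.le]
  calc genBinom (α * K) (α * J) * x ^ (α * J) * y ^ (α * B)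
      = (x ^ J * y ^ B) * genBinom (α * K) (α * J) *
          (x ^ (J * (α - 1)) * y ^ (B * (α - 1))) := by rw [e1, e2]; ring
    _ = (x ^ J * y ^ B) * genBinom (α * K) (α * J) * (x ^ J * y ^ B) ^ (α - 1) := by
        rw [e3]
    _ ≤ (x ^ J * y ^ B) * genBinom (α * K) (α * J) * (M * (x + y) ^ K) ^ (α - 1) := by
        apply mul_le_mul_of_nonneg_left hAM (by positivity)
    _ = ((x ^ J * y ^ B) * (x + y) ^ (K * (α - 1))) *
          (genBinom (α * K) (α * J) * M ^ (α - 1)) := by rw [e4]; ring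
    _ ≤ ((x ^ J * y ^ B) * (x + y) ^ (K * (α - 1))) * ((j + b).choose j : ℝ) := by
        apply mul_le_mul_of_nonneg_left _ (by positivity)
        exact lemmaA hα.le hj hb
    _ = ((j + b).choose j : ℝ) * (x ^ J * y ^ B) * (x + y) ^ ((α - 1) * K) := by
        rw [mul_comm K (α - 1)]; ring

theorem binom_ineq_alpha_gt_one (k : ℕ) (hk : 1 ≤ k) (α : ℝ) (hα : 1 < α)
    (x y : ℝ) (hx : 0 < x) (hy : 0 < y) :
    ∑ j ∈ Finset.range (k + 1),
        genBinom (α * k) (α * j) * x ^ (α * j) * y ^ (α * (k - j : ℕ)) <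
      (x + y) ^ (α * k) := by
  have hxy : (0:ℝ) < x + y := by linarith
  have hk0 : (0:ℝ) < (k:ℝ) := by exact_mod_cast hk
  have hαk : (0:ℝ) < α * k + 1 := by nlinarith
  have hgk : 0 < Real.Gamma (α * (k:ℝ) + 1) := Real.Gamma_pos_of_pos hαk
  -- the comparison sum
  set g : ℕ → ℝ := fun j => ((k.choose j : ℝ) * (x ^ ((j:ℝ)) * y ^ (((k - j : ℕ)):ℝ))) *
    (x + y) ^ ((α - 1) * (k:ℝ)) with hg
  have hstep : ∑ j ∈ Finset.range (k + 1),
      genBinom (α * k) (α * j) * x ^ (α * j) * y ^ (α * (k - j : ℕ)) <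
      ∑ j ∈ Finset.range (k + 1), g j := by
    apply Finset.sum_lt_sum
    · -- all terms ≤
      intro j hj
      rw [Finset.mem_range] at hj
      have hjk : j ≤ k := Nat.lt_succ_iff.mp hj
      rcases Nat.eq_zero_or_pos j with h0 | hj1
      · subst h0
        simp only [Nat.cast_zero, mul_zero, Real.rpow_zero, Nat.sub_zero, Nat.choose_zero_right,
          Nat.cast_one, mul_one, one_mul, hg]
        have hgb0 : genBinom (α * k) 0 = 1 := by
          rw [genBinom, sub_zero, zero_add, Real.Gamma_one, one_mul, div_self hgk.ne']
        rw [hgb0, one_mul]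
        have : y ^ (α * (k:ℝ)) = y ^ ((k:ℝ)) * y ^ ((α - 1) * (k:ℝ)) := by
          rw [← Real.rpow_add hy]; congr 1; ring
        rw [this]
        have h1 : y ^ ((α - 1) * (k:ℝ)) < (x + y) ^ ((α - 1) * (k:ℝ)) := by
          apply Real.rpow_lt_rpow hy.le (by linarith) (by nlinarith)
        have h2 : (0:ℝ) < y ^ ((k:ℝ)) := Real.rpow_pos_of_pos hy _
        exact mul_le_mul_of_nonneg_left h1.le h2.le
      · rcases eq_or_lt_of_le hjk with hjk' | hjk'
        · subst hjk'
          simp only [Nat.sub_self, Nat.cast_zero, mul_zero, Real.rpow_zero, mul_one, hg,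
            Nat.choose_self, Nat.cast_one, one_mul]
          have hgb1 : genBinom (α * j) (α * j) = 1 := by
            rw [genBinom, show α * (j:ℝ) - α * j + 1 = 1 by ring, Real.Gamma_one, mul_one,
              div_self]
            exact (Real.Gamma_pos_of_pos (by nlinarith : (0:ℝ) < α * (j:ℝ) + 1)).ne'
          rw [hgb1, one_mul]
          have : x ^ (α * (j:ℝ)) = x ^ ((j:ℝ)) * x ^ ((α - 1) * (j:ℝ)) := by
            rw [← Real.rpow_add hx]; congr 1; ring
          rw [this]
          apply mul_le_mul_of_nonneg_left _ (Real.rpow_pos_of_pos hx _).le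
          apply Real.rpow_le_rpow hx.le (by linarith) (by nlinarith)
        · -- middle terms
          set b := k - j with hb
          have hb1 : 1 ≤ b := by omega
          have hjb : j + b = k := by omega
          rw [hg]
          simp only
          rw [← hjb]
          push_cast [Nat.add_sub_cancel_left]
          exact middle_term hα hx hy hj1 hb1
    · -- strict at j = 0
      refine ⟨0, Finset.mem_range.mpr (Nat.succ_pos k), ?_⟩
      simp only [Nat.cast_zero, mul_zero, Real.rpow_zero, Nat.sub_zero, Nat.choose_zero_right,
        Nat.cast_one, mul_one, one_mul, hg]
      have hgb0 : genBinom (α * k) 0 = 1 := by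
        rw [genBinom, sub_zero, zero_add, Real.Gamma_one, one_mul, div_self hgk.ne']
      rw [hgb0, one_mul]
      have hey : y ^ (α * (k:ℝ)) = y ^ ((k:ℝ)) * y ^ ((α - 1) * (k:ℝ)) := by
        rw [← Real.rpow_add hy]; congr 1; ring
      rw [hey]
      have h1 : y ^ ((α - 1) * (k:ℝ)) < (x + y) ^ ((α - 1) * (k:ℝ)) := by
        apply Real.rpow_lt_rpow hy.le (by linarith) (by nlinarith)
      have h2 : (0:ℝ) < y ^ ((k:ℝ)) := Real.rpow_pos_of_pos hy _
      exact mul_lt_mul_of_pos_left h1 h2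
  have hsum : ∑ j ∈ Finset.range (k + 1), g j = (x + y) ^ (α * (k:ℝ)) := by
    rw [hg, ← Finset.sum_mul]
    have hbin : ∑ j ∈ Finset.range (k + 1), ((k.choose j : ℝ) *
        (x ^ ((j:ℝ)) * y ^ (((k - j : ℕ)):ℝ))) = (x + y) ^ k := by
      rw [add_pow]
      apply Finset.sum_congr rfl
      intro j hj
      rw [Real.rpow_natCast, Real.rpow_natCast]
      ring
    rw [hbin, ← Real.rpow_natCast (x + y) k, ← Real.rpow_add hxy]
    congr 1
    ring
  rw [hsum] at hstep
  exact hstep
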